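/- Let k ≥ 3 be an integer and let l be an odd integer. If k is odd, then Φ(2^k, 2l) = √2 · exp(πi l/4); if k is even, then Φ(2^k, 2l) = 1 + exp(πi l/2). -/

import Mathlib

open Complex Finset

/-- Normalized quadratic Gauss sum `Φ(a, b) = (1/√a) · Σ_{n=0}^{a−1} exp(πi n² b / a)`. -/
noncomputable def Phi (a b : ℤ) : ℂ :=
  ((Real.sqrt (a : ℝ) : ℝ) : ℂ)⁻¹ *
    ∑ n ∈ Finset.range a.toNat,
      Complex.exp (Real.pi * Complex.I * (n : ℂ) ^ 2 * (b : ℂ) / (a : ℂ))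

noncomputable def E (x : ℂ) : ℂ := Complex.exp (Real.pi * Complex.I * x)

lemma E_zero : E 0 = 1 := by simp [E]

lemma E_add (x y : ℂ) : E (x + y) = E x * E y := by
  simp [E, mul_add, Complex.exp_add]

lemma E_two_int (m : ℤ) : E (2 * m) = 1 := by
  have : (Real.pi : ℂ) * Complex.I * (2 * m) = m * (2 * Real.pi * Complex.I) := by ring
  rw [E, this, Complex.exp_int_mul_two_pi_mul_I]

lemma E_shift (x : ℂ) (m : ℤ) : E (x + 2 * m) = E x := by
  rw [E_add, E_two_int, mul_one]

lemma E_odd (m : ℤ) (hm : Odd m) : E m = -1 := by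
  obtain ⟨j, hj⟩ := hm
  have : (m : ℂ) = 1 + 2 * j := by rw [hj]; push_cast; ring
  rw [this, E_shift]
  simpa [E] using Complex.exp_pi_mul_I

lemma E_odd_shift (x : ℂ) (m : ℤ) (hm : Odd m) : E (x + m) = - E x := by
  rw [E_add, E_odd m hm, mul_neg_one]

lemma sum_range_double (g : ℕ → ℂ) (N : ℕ) :
    ∑ n ∈ range (2 * N), g n = ∑ m ∈ range N, (g (2 * m) + g (2 * m + 1)) := by
  induction N with
  | zero => simp
  | succ N ih =>
    rw [Nat.mul_succ, Finset.sum_range_succ, Finset.sum_range_succ, Finset.sum_range_succ, ← ih]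
    ring

noncomputable def T (l : ℤ) (j : ℕ) : ℂ :=
  ∑ n ∈ range (2 ^ (j + 1)), E ((n : ℂ) ^ 2 * l / 2 ^ j)

/-- reduce a term mod the period -/
lemma term_reduce (l : ℤ) (j : ℕ) (x r q : ℤ) (h : x ^ 2 = r + 2 ^ (j + 1) * q) :
    E ((x : ℂ) ^ 2 * l / 2 ^ j) = E ((r : ℂ) * l / 2 ^ j) := by
  have h2 : ((2 : ℂ) ^ j) ≠ 0 := pow_ne_zero _ two_ne_zero
  have hs : ((x : ℂ)) ^ 2 * l / 2 ^ j = (r : ℂ) * l / 2 ^ j + 2 * ((q * l : ℤ) : ℂ) := by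
    have hx : ((x : ℂ)) ^ 2 = (r : ℂ) + 2 ^ (j + 1) * q := by
      exact_mod_cast congrArg (Int.cast : ℤ → ℂ) h
    rw [hx]
    push_cast
    field_simp
    ring
  rw [hs, E_shift]

lemma base2 (l : ℤ) (hl : Odd l) : T l 2 = 4 * E (l / 4) := by
  have red : ∀ (n : ℕ) (r q : ℤ), ((n : ℤ)) ^ 2 = r + 8 * q →
      E ((n : ℂ) ^ 2 * l / 2 ^ 2) = E ((r : ℂ) * l / 2 ^ 2) := by
    intro n r q h
    have h' := term_reduce l 2 (n : ℤ) r q (by push_cast at h ⊢; linarith)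
    rw [show (((n : ℤ) : ℂ)) = (n : ℂ) by push_cast; ring] at h'
    exact h'
  have t0 := red 0 0 0 (by norm_num)
  have t1 := red 1 1 0 (by norm_num)
  have t2 := red 2 4 0 (by norm_num)
  have t3 := red 3 1 1 (by norm_num)
  have t4 := red 4 0 2 (by norm_num)
  have t5 := red 5 1 3 (by norm_num)
  have t6 := red 6 4 4 (by norm_num)
  have t7 := red 7 1 6 (by norm_num)
  have e0 : E ((0 : ℂ) * l / 2 ^ 2) = 1 := by
    rw [show ((0:ℂ) * l / 2 ^ 2) = 0 by ring, E_zero]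
  have e4 : E ((4 : ℂ) * l / 2 ^ 2) = -1 := by
    rw [show ((4:ℂ) * l / 2 ^ 2) = ((l : ℤ) : ℂ) by push_cast; ring]
    exact E_odd l hl
  have e1 : E ((1 : ℂ) * l / 2 ^ 2) = E ((l : ℂ) / 4) := by norm_num
  rw [T, show (2 : ℕ) ^ (2 + 1) = 8 by norm_num]
  rw [show (8 : ℕ) = 7 + 1 by norm_num, Finset.sum_range_succ, Finset.sum_range_succ,
    Finset.sum_range_succ, Finset.sum_range_succ, Finset.sum_range_succ, Finset.sum_range_succ,
    Finset.sum_range_succ, Finset.sum_range_succ, Finset.sum_range_zero]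
  norm_num at t0 t1 t2 t3 t4 t5 t6 t7 e0 e1 e4 ⊢
  rw [t3, t4, t5, t6, t7, e0, e4]
  ring

lemma base3 (l : ℤ) (hl : Odd l) : T l 3 = 4 * (1 + E (l / 2)) := by
  have red : ∀ (n : ℕ) (r q : ℤ), ((n : ℤ)) ^ 2 = r + 16 * q →
      E ((n : ℂ) ^ 2 * l / 2 ^ 3) = E ((r : ℂ) * l / 2 ^ 3) := by
    intro n r q h
    have h' := term_reduce l 3 (n : ℤ) r q (by push_cast at h ⊢; linarith)
    rw [show (((n : ℤ) : ℂ)) = (n : ℂ) by push_cast; ring] at h'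
    exact h'
  have t0 := red 0 0 0 (by norm_num)
  have t1 := red 1 1 0 (by norm_num)
  have t2 := red 2 4 0 (by norm_num)
  have t3 := red 3 9 0 (by norm_num)
  have t4 := red 4 0 1 (by norm_num)
  have t5 := red 5 9 1 (by norm_num)
  have t6 := red 6 4 2 (by norm_num)
  have t7 := red 7 1 3 (by norm_num)
  have t8 := red 8 0 4 (by norm_num)
  have t9 := red 9 1 5 (by norm_num)
  have t10 := red 10 4 6 (by norm_num)
  have t11 := red 11 9 7 (by norm_num)
  have t12 := red 12 0 9 (by norm_num)
  have t13 := red 13 9 10 (by norm_num)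
  have t14 := red 14 4 12 (by norm_num)
  have t15 := red 15 1 14 (by norm_num)
  have e0 : E (0 : ℂ) = 1 := E_zero
  have e4 : E ((4 : ℂ) * l / 2 ^ 3) = E ((l : ℂ) / 2) := by
    rw [show ((4:ℂ) * l / 2 ^ 3) = (l : ℂ) / 2 by ring]
  have e9 : E ((9 : ℂ) * l / 2 ^ 3) = - E ((l : ℂ) / 8) := by
    rw [show ((9:ℂ) * l / 2 ^ 3) = (l : ℂ) / 8 + ((l : ℤ) : ℂ) by push_cast; ring]
    exact E_odd_shift _ l hl
  rw [T, show (2 : ℕ) ^ (3 + 1) = 16 by norm_num]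
  rw [show (16 : ℕ) = 15 + 1 by norm_num, Finset.sum_range_succ, Finset.sum_range_succ,
    Finset.sum_range_succ, Finset.sum_range_succ, Finset.sum_range_succ, Finset.sum_range_succ,
    Finset.sum_range_succ, Finset.sum_range_succ, Finset.sum_range_succ, Finset.sum_range_succ,
    Finset.sum_range_succ, Finset.sum_range_succ, Finset.sum_range_succ, Finset.sum_range_succ,
    Finset.sum_range_succ, Finset.sum_range_succ, Finset.sum_range_zero]
  norm_num at t0 t1 t2 t3 t4 t5 t6 t7 t8 t9 t10 t11 t12 t13 t14 t15 e4 e9 ⊢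
  rw [t4, t5, t6, t7, t8, t9, t10, t11, t12, t13, t14, t15, e0, e4, e9]
  ring

lemma E_div_shift (j : ℕ) (x : ℂ) (d : ℤ) :
    E ((x + 2 ^ (j + 1) * d) / 2 ^ j) = E (x / 2 ^ j) := by
  have hne : ((2 : ℂ) ^ j) ≠ 0 := pow_ne_zero _ two_ne_zero
  have h : (x + 2 ^ (j + 1) * d) / 2 ^ j = x / 2 ^ j + 2 * (d : ℂ) := by
    rw [pow_succ]; field_simp
  rw [h, show ((d : ℂ)) = ((d : ℤ) : ℂ) by norm_num, E_shift]

lemma E_div_flip (j : ℕ) (x : ℂ) (s : ℤ) (hs : Odd s) :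
    E ((x + 2 ^ j * s) / 2 ^ j) = - E (x / 2 ^ j) := by
  have hne : ((2 : ℂ) ^ j) ≠ 0 := pow_ne_zero _ two_ne_zero
  have h : (x + 2 ^ j * s) / 2 ^ j = x / 2 ^ j + (s : ℂ) := by field_simp
  rw [h, E_odd_shift _ s hs]

lemma step (l : ℤ) (hl : Odd l) (m : ℕ) : T l (m + 4) = 2 * T l (m + 2) := by
  rw [T, show (2 : ℕ) ^ (m + 4 + 1) = 2 * 2 ^ (m + 4) by ring, sum_range_double,
    Finset.sum_add_distrib]
  have hA : ∑ i ∈ range (2 ^ (m + 4)), E (((2 * i : ℕ) : ℂ) ^ 2 * l / 2 ^ (m + 4))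
      = 2 * T l (m + 2) := by
    have h1 : ∀ i : ℕ, E (((2 * i : ℕ) : ℂ) ^ 2 * l / 2 ^ (m + 4))
        = E ((i : ℂ) ^ 2 * l / 2 ^ (m + 2)) := by
      intro i
      have hne : ((2 : ℂ) ^ (m + 2)) ≠ 0 := pow_ne_zero _ two_ne_zero
      have h4 : (2 : ℂ) ^ (m + 4) = 2 ^ (m + 2) * 4 := by rw [pow_add, pow_add]; ring
      congr 1
      push_cast
      rw [h4]
      field_simp
      ring
    simp only [h1]
    rw [show (2 : ℕ) ^ (m + 4) = 2 ^ (m + 3) + 2 ^ (m + 3) by ring, Finset.sum_range_add]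
    have h2 : ∀ i : ℕ, E ((((2 ^ (m + 3) + i : ℕ)) : ℂ) ^ 2 * l / 2 ^ (m + 2))
        = E ((i : ℂ) ^ 2 * l / 2 ^ (m + 2)) := by
      intro i
      have hx : (((2 ^ (m + 3) + i : ℕ)) : ℂ) ^ 2 * l
          = (i : ℂ) ^ 2 * l + 2 ^ (m + 2 + 1) * (((2 * i + 2 ^ (m + 3)) * l : ℤ) : ℂ) := by
        push_cast
        ring
      rw [hx, E_div_shift]
    simp only [h2]
    rw [T]
    ring
  have hB : ∑ i ∈ range (2 ^ (m + 4)), E (((2 * i + 1 : ℕ) : ℂ) ^ 2 * l / 2 ^ (m + 4)) = 0 := by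
    have h1 : ∀ i : ℕ, E (((2 * i + 1 : ℕ) : ℂ) ^ 2 * l / 2 ^ (m + 4))
        = E ((2 * (i : ℂ) + 1) ^ 2 * l / 2 ^ (m + 4)) := by
      intro i; congr 1; push_cast; ring
    simp only [h1]
    rw [show (2 : ℕ) ^ (m + 4) = 2 ^ (m + 3) + 2 ^ (m + 3) by ring, Finset.sum_range_add]
    have h2 : ∀ i : ℕ, E ((2 * (((2 ^ (m + 3) + i : ℕ)) : ℂ) + 1) ^ 2 * l / 2 ^ (m + 4))
        = E ((2 * (i : ℂ) + 1) ^ 2 * l / 2 ^ (m + 4)) := by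
      intro i
      have hx : (2 * (((2 ^ (m + 3) + i : ℕ)) : ℂ) + 1) ^ 2 * l
          = (2 * (i : ℂ) + 1) ^ 2 * l
            + 2 ^ (m + 4 + 1) * (((2 * i + 1 + 2 ^ (m + 3)) * l : ℤ) : ℂ) := by
        push_cast
        ring
      rw [hx, E_div_shift]
    simp only [h2]
    rw [show (2 : ℕ) ^ (m + 3) = 2 ^ (m + 2) + 2 ^ (m + 2) by ring, Finset.sum_range_add]
    have h3 : ∀ i : ℕ, E ((2 * (((2 ^ (m + 2) + i : ℕ)) : ℂ) + 1) ^ 2 * l / 2 ^ (m + 4))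
        = - E ((2 * (i : ℂ) + 1) ^ 2 * l / 2 ^ (m + 4)) := by
      intro i
      have hx : (2 * (((2 ^ (m + 2) + i : ℕ)) : ℂ) + 1) ^ 2 * l
          = (2 * (i : ℂ) + 1) ^ 2 * l
            + 2 ^ (m + 4) * (((2 * i + 1 + 2 ^ (m + 2)) * l : ℤ) : ℂ) := by
        push_cast
        ring
      rw [hx, E_div_flip]
      exact Odd.mul ⟨i + 2 ^ (m + 1), by ring⟩ hl
    simp only [h3]
    rw [Finset.sum_neg_distrib]
    ring
  rw [hA, hB, add_zero]

lemma phi_eq (l : ℤ) (j : ℕ) :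
    Phi (2 ^ (j + 1)) (2 * l) = ((Real.sqrt (2 ^ (j + 1)) : ℝ) : ℂ)⁻¹ * T l j := by
  rw [Phi, T]
  congr 1
  · norm_num
  · rw [show ((2 : ℤ) ^ (j + 1)).toNat = 2 ^ (j + 1) by
      rw [show ((2 : ℤ) ^ (j + 1)) = ((2 ^ (j + 1) : ℕ) : ℤ) by push_cast; ring]
      exact Int.toNat_natCast _]
    refine Finset.sum_congr rfl fun n _ => ?_
    rw [E]
    congr 1
    have hne : ((2 : ℂ) ^ j) ≠ 0 := pow_ne_zero _ two_ne_zero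
    push_cast
    rw [pow_succ]
    field_simp
    ring

lemma phi_step (l : ℤ) (hl : Odd l) (j : ℕ) :
    Phi (2 ^ (j + 5)) (2 * l) = Phi (2 ^ (j + 3)) (2 * l) := by
  rw [show j + 5 = (j + 4) + 1 by ring, show j + 3 = (j + 2) + 1 by ring,
    phi_eq, phi_eq, step l hl j]
  have hs : Real.sqrt (2 ^ (j + 4 + 1)) = 2 * Real.sqrt (2 ^ (j + 2 + 1)) := by
    rw [show (2 : ℝ) ^ (j + 4 + 1) = 2 ^ 2 * 2 ^ (j + 2 + 1) by ring,
      Real.sqrt_mul (by positivity), Real.sqrt_sq (by norm_num)]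
  have hne : ((Real.sqrt (2 ^ (j + 2 + 1)) : ℝ) : ℂ) ≠ 0 := by
    rw [Complex.ofReal_ne_zero]
    positivity
  rw [hs]
  push_cast
  field_simp

lemma base_phi3 (l : ℤ) (hl : Odd l) :
    Phi (2 ^ 3) (2 * l) = ((Real.sqrt 2 : ℝ) : ℂ) * Complex.exp (Real.pi * Complex.I * (l : ℂ) / 4) := by
  rw [show ((2 : ℤ) ^ 3) = 2 ^ (2 + 1) by norm_num, phi_eq, base2 l hl]
  have hs : Real.sqrt (2 ^ (2 + 1)) = 2 * Real.sqrt 2 := by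
    rw [show (2 : ℝ) ^ (2 + 1) = 2 ^ 2 * 2 by ring,
      Real.sqrt_mul (by positivity), Real.sqrt_sq (by norm_num)]
  have hsq : ((Real.sqrt 2 : ℝ) : ℂ) ^ 2 = 2 := by
    rw [← Complex.ofReal_pow, Real.sq_sqrt (by norm_num)]
    norm_num
  have hne : ((Real.sqrt 2 : ℝ) : ℂ) ≠ 0 := by
    rw [Complex.ofReal_ne_zero]; positivity
  rw [hs, E, show Real.pi * Complex.I * ((l : ℂ) / 4) = Real.pi * Complex.I * (l : ℂ) / 4 by ring]
  push_cast
  field_simp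
  linear_combination (-2 : ℂ) * hsq

lemma base_phi4 (l : ℤ) (hl : Odd l) :
    Phi (2 ^ 4) (2 * l) = 1 + Complex.exp (Real.pi * Complex.I * (l : ℂ) / 2) := by
  rw [show (4 : ℕ) = 3 + 1 by norm_num, phi_eq, base3 l hl]
  have hs : Real.sqrt (2 ^ (3 + 1)) = 4 := by
    rw [show (2 : ℝ) ^ (3 + 1) = 4 ^ 2 by norm_num, Real.sqrt_sq (by norm_num)]
  rw [hs, E, show Real.pi * Complex.I * ((l : ℂ) / 2) = Real.pi * Complex.I * (l : ℂ) / 2 by ring]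
  push_cast
  ring

/-- Evaluation of `Φ(2^k, 2l)` for `k ≥ 3` and odd `l`. -/
theorem phi_two_eval (k : ℕ) (hk : 3 ≤ k) (l : ℤ) (hl : Odd l) :
    (Odd k → Phi (2 ^ k) (2 * l) =
      ((Real.sqrt 2 : ℝ) : ℂ) * Complex.exp (Real.pi * Complex.I * (l : ℂ) / 4)) ∧
    (Even k → Phi (2 ^ k) (2 * l) =
      1 + Complex.exp (Real.pi * Complex.I * (l : ℂ) / 2)) := by
  suffices H : ∀ m : ℕ,
      (Odd (m + 3) → Phi (2 ^ (m + 3)) (2 * l) =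
        ((Real.sqrt 2 : ℝ) : ℂ) * Complex.exp (Real.pi * Complex.I * (l : ℂ) / 4)) ∧
      (Even (m + 3) → Phi (2 ^ (m + 3)) (2 * l) =
        1 + Complex.exp (Real.pi * Complex.I * (l : ℂ) / 2)) by
    obtain ⟨m, rfl⟩ : ∃ m, k = m + 3 := ⟨k - 3, by omega⟩
    exact H m
  intro m
  induction m using Nat.strong_induction_on with
  | _ m ih =>
    match m with
    | 0 =>
      refine ⟨fun _ => base_phi3 l hl, fun h => absurd h (by decide)⟩
    | 1 =>
      refine ⟨fun h => absurd h (by decide), fun _ => base_phi4 l hl⟩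
    | (n + 2) =>
      have IH := ih n (by omega)
      have hrec : Phi (2 ^ (n + 2 + 3)) (2 * l) = Phi (2 ^ (n + 3)) (2 * l) := by
        rw [show n + 2 + 3 = n + 5 by ring]
        exact phi_step l hl n
      constructor
      · intro h
        rw [hrec]
        exact IH.1 (by simp [Nat.odd_iff] at h ⊢; omega)
      · intro h
        rw [hrec]
        exact IH.2 (by simp [Nat.even_iff] at h ⊢; omega)
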